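/- arXiv:2501.02561 — 3 statements merged into one kernel-verified Lean document; each statement's English description precedes it below -/
import Mathlib

section
/- Every centered Euclidean ball is intuitive: for every n ≥ 1 and every r > 0, the closed Euclidean ball K = {x ∈ ℝⁿ : ‖x‖₂ ≤ r} is intuitive, i.e., for every finite set P ⊆ ℝⁿ and every probability weight W on P, the set of geometric medians GM_K(W) intersects the convex hull of P. -/
open scoped RealInnerProductSpace

/-- The objective function `F_{K,W}` of the geometric median problem:
`ξ ↦ ∑_{p ∈ P} W p * ‖ξ - p‖_K`, where `‖·‖_K` is the Minkowski gauge of `K`. -/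
noncomputable def medianObj {n : ℕ} (K : Set (EuclideanSpace ℝ (Fin n)))
    (P : Finset (EuclideanSpace ℝ (Fin n))) (W : EuclideanSpace ℝ (Fin n) → ℝ)
    (ξ : EuclideanSpace ℝ (Fin n)) : ℝ :=
  ∑ p ∈ P, W p * gauge K (ξ - p)

/-- The geometric median `GM_K(W)`: the set of global minimizers of `F_{K,W}`. -/
def geomMedian {n : ℕ} (K : Set (EuclideanSpace ℝ (Fin n)))
    (P : Finset (EuclideanSpace ℝ (Fin n))) (W : EuclideanSpace ℝ (Fin n) → ℝ) :
    Set (EuclideanSpace ℝ (Fin n)) :=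
  {ξ | ∀ η, medianObj K P W ξ ≤ medianObj K P W η}

/-- A symmetric convex body: compact, convex, with nonempty interior, and `K = -K`. -/
def IsSymmConvexBody {n : ℕ} (K : Set (EuclideanSpace ℝ (Fin n))) : Prop :=
  Convex ℝ K ∧ IsCompact K ∧ (interior K).Nonempty ∧ K = -K

/-- `K` is intuitive if for every finite set `P` and probability weight `W` on `P`,
some geometric median lies in the convex hull of `P`. -/
def Intuitive {n : ℕ} (K : Set (EuclideanSpace ℝ (Fin n))) : Prop :=
  ∀ (P : Finset (EuclideanSpace ℝ (Fin n))) (W : EuclideanSpace ℝ (Fin n) → ℝ),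
    (∀ p ∈ P, 0 ≤ W p) → (∑ p ∈ P, W p) = 1 →
    (geomMedian K P W ∩ convexHull ℝ (P : Set (EuclideanSpace ℝ (Fin n)))).Nonempty

/-- Projection onto a nonempty closed convex set does not increase distances to points
of the set. -/
lemma exists_proj_dist_le {n : ℕ} {C : Set (EuclideanSpace ℝ (Fin n))}
    (hne : C.Nonempty) (hcl : IsClosed C) (hconv : Convex ℝ C)
    (η : EuclideanSpace ℝ (Fin n)) :
    ∃ v ∈ C, ∀ p ∈ C, ‖v - p‖ ≤ ‖η - p‖ := by
  obtain ⟨v, hv, hmin⟩ :=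
    exists_norm_eq_iInf_of_complete_convex hne hcl.isComplete hconv η
  refine ⟨v, hv, fun p hp => ?_⟩
  have hinner : ∀ w ∈ C, ⟪η - v, w - v⟫ ≤ 0 :=
    (norm_eq_iInf_iff_real_inner_le_zero hconv hv).1 hmin
  have h1 : ⟪η - v, p - v⟫ ≤ 0 := hinner p hp
  have hsq : ‖v - p‖ ^ 2 ≤ ‖η - p‖ ^ 2 := by
    have hdecomp : η - p = (η - v) + (v - p) := by abel
    have : ‖η - p‖ ^ 2 = ‖η - v‖ ^ 2 + 2 * ⟪η - v, v - p⟫ + ‖v - p‖ ^ 2 := by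
      rw [hdecomp, @norm_add_sq_real]
    have h2 : 0 ≤ ⟪η - v, v - p⟫ := by
      have : ⟪η - v, v - p⟫ = -⟪η - v, p - v⟫ := by
        rw [← inner_neg_right]; congr 1; abel
      rw [this]; linarith
    nlinarith [sq_nonneg ‖η - v‖]
  nlinarith [norm_nonneg (v - p), norm_nonneg (η - p)]

/-- Every centered Euclidean ball is intuitive. -/
theorem centered_ball_intuitive (n : ℕ) (hn : 1 ≤ n) (r : ℝ) (hr : 0 < r) :
    Intuitive (Metric.closedBall (0 : EuclideanSpace ℝ (Fin n)) r) := by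
  intro P W hW hW1
  have hPne : P.Nonempty := by
    by_contra h
    rw [Finset.not_nonempty_iff_eq_empty] at h
    simp [h] at hW1
  set C : Set (EuclideanSpace ℝ (Fin n)) := convexHull ℝ (P : Set (EuclideanSpace ℝ (Fin n)))
  have hCcompact : IsCompact C := P.finite_toSet.isCompact_convexHull (𝕜 := ℝ)
  have hCne : C.Nonempty := hPne.to_set.mono (subset_convexHull ℝ _)
  have hCconv : Convex ℝ C := convex_convexHull ℝ _
  have hgauge : ∀ x : EuclideanSpace ℝ (Fin n),
      gauge (Metric.closedBall (0 : EuclideanSpace ℝ (Fin n)) r) x = ‖x‖ / r :=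
    fun x => gauge_closedBall hr.le x
  have hobj : ∀ ξ, medianObj (Metric.closedBall (0 : EuclideanSpace ℝ (Fin n)) r) P W ξ
      = ∑ p ∈ P, W p * (‖ξ - p‖ / r) := by
    intro ξ; unfold medianObj; simp_rw [hgauge]
  have hcont : Continuous fun ξ =>
      medianObj (Metric.closedBall (0 : EuclideanSpace ℝ (Fin n)) r) P W ξ := by
    simp_rw [hobj]
    exact continuous_finset_sum _ fun p _ =>
      continuous_const.mul (((continuous_id.sub continuous_const).norm).div_const r)
  obtain ⟨ξ₀, hξ₀C, hξ₀min⟩ := hCcompact.exists_isMinOn hCne hcont.continuousOn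
  refine ⟨ξ₀, ?_, hξ₀C⟩
  intro η
  obtain ⟨v, hvC, hvle⟩ :=
    exists_proj_dist_le hCne hCcompact.isClosed hCconv η
  calc medianObj _ P W ξ₀ ≤ medianObj _ P W v := hξ₀min hvC
    _ ≤ medianObj _ P W η := by
        rw [hobj, hobj]
        refine Finset.sum_le_sum fun p hp => ?_
        have hpC : p ∈ C := subset_convexHull ℝ _ hp
        exact mul_le_mul_of_nonneg_left
          (div_le_div_of_nonneg_right (hvle p hpC) hr.le) (hW p hp)
end

section
/- All centered ellipsoids are intuitive: for every n ≥ 1, if K ⊆ ℝⁿ is the image of the closed Euclidean unit ball under an invertible linear map ℝⁿ → ℝⁿ, then K is intuitive. -/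
open scoped RealInnerProductSpace

lemma gauge_linear_image {E : Type*} [AddCommGroup E] [Module ℝ E]
    (T : E ≃ₗ[ℝ] E) (s : Set E) (x : E) :
    gauge (T '' s) x = gauge s (T.symm x) := by
  unfold gauge
  congr 1
  ext t
  simp only [Set.mem_setOf_eq, Set.mem_Ioi]
  refine and_congr_right fun ht => ?_
  rw [Set.mem_smul_set_iff_inv_smul_mem₀ ht.ne', Set.mem_smul_set_iff_inv_smul_mem₀ ht.ne']
  constructor
  · rintro ⟨y, hy, hyx⟩
    have : y = T.symm (t⁻¹ • x) := by rw [← hyx, T.symm_apply_apply]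
    rw [this] at hy
    simpa [map_smul] using hy
  · intro h
    exact ⟨T.symm (t⁻¹ • x), by simpa [map_smul] using h, T.apply_symm_apply _⟩

/-- Projection contraction in a real inner product space. -/
lemma exists_contraction_point {F : Type*} [NormedAddCommGroup F] [InnerProductSpace ℝ F]
    {D : Set F} (hne : D.Nonempty) (hcpt : IsCompact D) (hconv : Convex ℝ D) (u : F) :
    ∃ v ∈ D, ∀ w ∈ D, ‖v - w‖ ≤ ‖u - w‖ := by
  obtain ⟨v, hv, hmin⟩ := exists_norm_eq_iInf_of_complete_convex hne
    hcpt.isComplete hconv u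
  refine ⟨v, hv, fun w hw => ?_⟩
  have h1 : ⟪u - v, w - v⟫ ≤ 0 :=
    (norm_eq_iInf_iff_real_inner_le_zero hconv hv).1 hmin w hw
  have key : ‖v - w‖ ^ 2 ≤ ‖u - w‖ ^ 2 := by
    have huw : u - w = (u - v) + (v - w) := by abel
    have hvw : v - w = -(w - v) := by abel
    rw [huw, norm_add_sq_real]
    have h2 : ⟪u - v, v - w⟫ = -⟪u - v, w - v⟫ := by
      rw [hvw, inner_neg_right]
    nlinarith [sq_nonneg ‖u - v‖, h1, h2]
  exact (pow_le_pow_iff_left₀ (norm_nonneg _) (norm_nonneg _) two_ne_zero).mp key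

/-- All centered ellipsoids are intuitive. -/
theorem centered_ellipsoid_intuitive (n : ℕ) (hn : 1 ≤ n)
    (K : Set (EuclideanSpace ℝ (Fin n)))
    (T : EuclideanSpace ℝ (Fin n) ≃ₗ[ℝ] EuclideanSpace ℝ (Fin n))
    (hKT : K = T '' Metric.closedBall (0 : EuclideanSpace ℝ (Fin n)) 1) :
    Intuitive K := by
  intro P W hW hW1
  have hgauge : ∀ y : EuclideanSpace ℝ (Fin n), gauge K y = ‖T.symm y‖ := by
    intro y
    rw [hKT, gauge_linear_image, gauge_closedBall zero_le_one, div_one]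
  have hobj : ∀ ξ : EuclideanSpace ℝ (Fin n), medianObj K P W ξ
      = ∑ p ∈ P, W p * ‖T.symm ξ - T.symm p‖ := by
    intro ξ
    refine Finset.sum_congr rfl fun p _ => ?_
    rw [hgauge, map_sub]
  have hPne : P.Nonempty := by
    by_contra h
    rw [Finset.not_nonempty_iff_eq_empty] at h
    simp [h] at hW1
  set C : Set (EuclideanSpace ℝ (Fin n)) := convexHull ℝ (P : Set _) with hC
  have hCne : C.Nonempty :=
    (Finset.coe_nonempty.mpr hPne).mono (subset_convexHull ℝ _)
  have hCcpt : IsCompact C := P.finite_toSet.isCompact_convexHull (𝕜 := ℝ)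
  have hCconv : Convex ℝ C := convex_convexHull ℝ _
  have hTsc : Continuous (T.symm : EuclideanSpace ℝ (Fin n) → EuclideanSpace ℝ (Fin n)) :=
    LinearMap.continuous_of_finiteDimensional T.symm.toLinearMap
  have hFc : Continuous (medianObj K P W) := by
    have : medianObj K P W = fun ξ => ∑ p ∈ P, W p * ‖T.symm ξ - T.symm p‖ := funext hobj
    rw [this]
    exact continuous_finset_sum _ fun p _ =>
      continuous_const.mul ((hTsc.sub continuous_const).norm)
  obtain ⟨ξ₀, hξ₀C, hξ₀min⟩ := hCcpt.exists_isMinOn hCne hFc.continuousOn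
  refine ⟨ξ₀, fun η => ?_, hξ₀C⟩
  set D : Set (EuclideanSpace ℝ (Fin n)) := T.symm '' C with hD
  have hDne : D.Nonempty := hCne.image _
  have hDcpt : IsCompact D := hCcpt.image hTsc
  have hDconv : Convex ℝ D := hCconv.linear_image T.symm.toLinearMap
  obtain ⟨v, hvD, hv⟩ := exists_contraction_point hDne hDcpt hDconv (T.symm η)
  obtain ⟨ζ, hζC, rfl⟩ := hvD
  have hstep : medianObj K P W ζ ≤ medianObj K P W η := by
    rw [hobj, hobj]
    refine Finset.sum_le_sum fun p hp => ?_
    exact mul_le_mul_of_nonneg_left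
      (hv _ ⟨p, subset_convexHull ℝ _ (Finset.mem_coe.mpr hp), rfl⟩)
      (hW p hp)
  exact (hξ₀min hζC).trans hstep
end

section
/- Let K ⊆ ℝ³ be an intuitive symmetric convex body. Let ℓ be a Euclidean unit vector in ℝ³, let H = ℓ^⊥ be the plane orthogonal to ℓ, and let L = K ∩ H. Assume there are boundary points x, y of L (in H) such that the norm function F_{K,0}(ξ) = ‖ξ‖_K is differentiable at x and at y, and there exist subgradients g_x ∈ ∂F_{L,0}(x) and g_y ∈ ∂F_{L,0}(y) (subgradients of the restriction of ‖·‖_K to H, taken within H) that span H. Then there exists a Euclidean unit vector u ∈ ℝ³ such that the boundary of L (relative to H) is contained in the shadow boundary S(K, u). -/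
open scoped RealInnerProductSpace

/-- The line through `a` with direction `u`. -/
def lineThrough {n : ℕ} (a u : EuclideanSpace ℝ (Fin n)) : Set (EuclideanSpace ℝ (Fin n)) :=
  {x | ∃ t : ℝ, x = a + t • u}

/-- A set `ℓ` (a line) is tangent to `K` if it meets `K` but misses the interior of `K`. -/
def IsTangentLine {n : ℕ} (K ℓ : Set (EuclideanSpace ℝ (Fin n))) : Prop :=
  (ℓ ∩ K).Nonempty ∧ ℓ ∩ interior K = ∅

/-- `T(K, u)`: the union of all lines tangent to `K` and parallel to `u`. -/
def tangentLinesUnion {n : ℕ} (K : Set (EuclideanSpace ℝ (Fin n)))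
    (u : EuclideanSpace ℝ (Fin n)) : Set (EuclideanSpace ℝ (Fin n)) :=
  ⋃ (a : EuclideanSpace ℝ (Fin n)) (_ : IsTangentLine K (lineThrough a u)), lineThrough a u

/-- The shadow boundary `S(K, u) = T(K, u) ∩ K`. -/
def shadowBoundary {n : ℕ} (K : Set (EuclideanSpace ℝ (Fin n)))
    (u : EuclideanSpace ℝ (Fin n)) : Set (EuclideanSpace ℝ (Fin n)) :=
  tangentLinesUnion K u ∩ K

open scoped Pointwise in
set_option maxHeartbeats 1000000 in
private lemma main_ineq {n : ℕ} {K : Set (EuclideanSpace ℝ (Fin n))}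
    (hKconv : Convex ℝ K) (habs : Absorbent ℝ K)
    (hsymmg : ∀ w : EuclideanSpace ℝ (Fin n), gauge K (-w) = gauge K w)
    (hI : Intuitive K)
    (H : Submodule ℝ (EuclideanSpace ℝ (Fin n)))
    (x y z g₁ g₂ g₃ d : EuclideanSpace ℝ (Fin n))
    (hxH : x ∈ H) (hyH : y ∈ H) (hzH : z ∈ H)
    (hx1 : gauge K x = 1) (hy1 : gauge K y = 1) (hz1 : gauge K z = 1)
    (hne : x ≠ y)
    (α β : ℝ) (hα : 0 ≤ α) (hβ : 0 ≤ β) (hcomb : α • g₁ + β • g₂ = g₃)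
    (hsub₁ : ∀ w ∈ H, 1 + ⟪g₁, w - x⟫ ≤ gauge K w)
    (hsub₂ : ∀ w ∈ H, 1 + ⟪g₂, w - y⟫ ≤ gauge K w)
    (hsub₃ : ∀ w ∈ H, 1 + ⟪g₃, w - z⟫ ≤ gauge K w)
    (hd₁ : HasDerivAt (fun t : ℝ => gauge K (x + t • d)) 0 0)
    (hd₂ : HasDerivAt (fun t : ℝ => gauge K (y + t • d)) 0 0) :
    ∀ t : ℝ, 0 ≤ t → 1 ≤ gauge K (z + t • d) := by
  classical
  set p₁ : EuclideanSpace ℝ (Fin n) := (2:ℝ)⁻¹ • x with hp₁def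
  set p₂ : EuclideanSpace ℝ (Fin n) := (2:ℝ)⁻¹ • y with hp₂def
  set p₃ : EuclideanSpace ℝ (Fin n) := -z with hp₃def
  have hgp₁ : gauge K p₁ = 2⁻¹ := by
    rw [hp₁def, gauge_smul_of_nonneg (by norm_num : (0:ℝ) ≤ 2⁻¹), hx1, smul_eq_mul, mul_one]
  have hgp₂ : gauge K p₂ = 2⁻¹ := by
    rw [hp₂def, gauge_smul_of_nonneg (by norm_num : (0:ℝ) ≤ 2⁻¹), hy1, smul_eq_mul, mul_one]
  have hgp₃ : gauge K p₃ = 1 := by rw [hp₃def, hsymmg, hz1]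
  have hp12 : p₁ ≠ p₂ := by
    intro h
    exact hne (smul_right_injective _ (by norm_num : (2:ℝ)⁻¹ ≠ 0) h)
  have hp13 : p₁ ≠ p₃ := by
    intro h; rw [h, hgp₃] at hgp₁; norm_num at hgp₁
  have hp23 : p₂ ≠ p₃ := by
    intro h; rw [h, hgp₃] at hgp₂; norm_num at hgp₂
  set S : ℝ := α + β + 1 with hSdef
  have hS : (0:ℝ) < S := by rw [hSdef]; linarith
  set P : Finset (EuclideanSpace ℝ (Fin n)) := {p₁, p₂, p₃} with hPdef
  set W : EuclideanSpace ℝ (Fin n) → ℝ :=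
    fun p => if p = p₁ then α / S else if p = p₂ then β / S else 1 / S with hWdef
  have hW1 : W p₁ = α / S := by simp [hWdef]
  have hW2 : W p₂ = β / S := by simp [hWdef, (Ne.symm hp12 : p₂ ≠ p₁)]
  have hW3 : W p₃ = 1 / S := by
    simp [hWdef, (Ne.symm hp13 : p₃ ≠ p₁), (Ne.symm hp23 : p₃ ≠ p₂)]
  have hPsum : ∀ f : EuclideanSpace ℝ (Fin n) → ℝ,
      ∑ p ∈ P, f p = f p₁ + f p₂ + f p₃ := by
    intro f
    rw [hPdef]
    rw [Finset.sum_insert (by simp [hp12, hp13]), Finset.sum_insert (by simp [hp23]),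
      Finset.sum_singleton]
    ring
  have hW0 : ∀ p ∈ P, 0 ≤ W p := by
    intro p _
    rw [hWdef]
    dsimp only
    split_ifs
    · exact div_nonneg hα hS.le
    · exact div_nonneg hβ hS.le
    · exact div_nonneg zero_le_one hS.le
  have hWsum : ∑ p ∈ P, W p = 1 := by
    rw [hPsum W, hW1, hW2, hW3]
    field_simp
    exact hSdef.symm
  have hmedexp : ∀ ξ, medianObj K P W ξ =
      (α * gauge K (ξ - p₁) + β * gauge K (ξ - p₂) + gauge K (ξ - p₃)) / S := by
    intro ξ
    simp only [medianObj]
    rw [hPsum (fun p => W p * gauge K (ξ - p))]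
    rw [hW1, hW2, hW3]
    field_simp
  have hmed0 : medianObj K P W 0 = (α * 2⁻¹ + β * 2⁻¹ + 1) / S := by
    rw [hmedexp 0]
    rw [show (0:EuclideanSpace ℝ (Fin n)) - p₁ = -p₁ by module, hsymmg, hgp₁]
    rw [show (0:EuclideanSpace ℝ (Fin n)) - p₂ = -p₂ by module, hsymmg, hgp₂]
    rw [show (0:EuclideanSpace ℝ (Fin n)) - p₃ = z by rw [hp₃def]; module, hz1]
  -- term lower bounds
  have hA : ∀ ξ ∈ H, 2⁻¹ - ⟪g₁, ξ⟫ ≤ gauge K (ξ - p₁) := by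
    intro ξ hξ
    have h1 : ξ - p₁ = -((2:ℝ)⁻¹ • (x - (2:ℝ) • ξ)) := by rw [hp₁def]; module
    rw [h1, hsymmg, gauge_smul_of_nonneg (by norm_num : (0:ℝ) ≤ 2⁻¹), smul_eq_mul]
    have h2 := hsub₁ (x - (2:ℝ) • ξ) (H.sub_mem hxH (H.smul_mem _ hξ))
    have h3 : ⟪g₁, x - (2:ℝ) • ξ - x⟫ = -(2 * ⟪g₁, ξ⟫) := by
      rw [show x - (2:ℝ) • ξ - x = -((2:ℝ) • ξ) by module, inner_neg_right,
        real_inner_smul_right]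
    rw [h3] at h2
    linarith
  have hB : ∀ ξ ∈ H, 2⁻¹ - ⟪g₂, ξ⟫ ≤ gauge K (ξ - p₂) := by
    intro ξ hξ
    have h1 : ξ - p₂ = -((2:ℝ)⁻¹ • (y - (2:ℝ) • ξ)) := by rw [hp₂def]; module
    rw [h1, hsymmg, gauge_smul_of_nonneg (by norm_num : (0:ℝ) ≤ 2⁻¹), smul_eq_mul]
    have h2 := hsub₂ (y - (2:ℝ) • ξ) (H.sub_mem hyH (H.smul_mem _ hξ))
    have h3 : ⟪g₂, y - (2:ℝ) • ξ - y⟫ = -(2 * ⟪g₂, ξ⟫) := by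
      rw [show y - (2:ℝ) • ξ - y = -((2:ℝ) • ξ) by module, inner_neg_right,
        real_inner_smul_right]
    rw [h3] at h2
    linarith
  have hC : ∀ ξ ∈ H, 1 + ⟪g₃, ξ⟫ ≤ gauge K (ξ - p₃) := by
    intro ξ hξ
    have h2 := hsub₃ (ξ + z) (H.add_mem hξ hzH)
    rw [show ξ + z - z = ξ by module] at h2
    rw [show ξ - p₃ = ξ + z by rw [hp₃def]; module]
    exact h2
  have hIP : ∀ ξ, ⟪g₃, ξ⟫ = α * ⟪g₁, ξ⟫ + β * ⟪g₂, ξ⟫ := by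
    intro ξ
    rw [← hcomb, inner_add_left, real_inner_smul_left, real_inner_smul_left]
  have claim0 : ∀ ξ ∈ H, medianObj K P W 0 ≤ medianObj K P W ξ := by
    intro ξ hξ
    rw [hmed0, hmedexp ξ]
    rw [div_le_div_iff_of_pos_right hS]
    have h1 := mul_le_mul_of_nonneg_left (hA ξ hξ) hα
    have h2 := mul_le_mul_of_nonneg_left (hB ξ hξ) hβ
    rw [mul_sub] at h1 h2
    have h3 := hC ξ hξ
    have h4 := hIP ξ
    linarith [h1, h2, h3, h4]
  -- apply intuitiveness
  obtain ⟨ξ₀, hmed, hhull⟩ := hI P W hW0 hWsum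
  have hPH : (P : Set (EuclideanSpace ℝ (Fin n))) ⊆ (H : Set (EuclideanSpace ℝ (Fin n))) := by
    intro p hp
    rw [hPdef] at hp
    simp only [Finset.coe_insert, Finset.coe_singleton, Set.mem_insert_iff,
      Set.mem_singleton_iff] at hp
    rcases hp with rfl | rfl | rfl
    · exact H.smul_mem _ hxH
    · exact H.smul_mem _ hyH
    · exact H.neg_mem hzH
  have hξ₀H : ξ₀ ∈ H := by
    have := convexHull_min hPH H.convex
    exact this hhull
  have hglob : ∀ η, medianObj K P W 0 ≤ medianObj K P W η :=
    fun η => (claim0 ξ₀ hξ₀H).trans (hmed η)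
  -- step 5: quantitative inequality along the ray
  have hstep : ∀ s : ℝ,
      1 + (α/2) * (1 - gauge K (x + ((-2:ℝ)*s) • d)) + (β/2) * (1 - gauge K (y + ((-2:ℝ)*s) • d))
        ≤ gauge K (z + s • d) := by
    intro s
    have h0 := hglob (s • d)
    rw [hmed0, hmedexp (s • d)] at h0
    rw [div_le_div_iff_of_pos_right hS] at h0
    have e1 : s • d - p₁ = -((2:ℝ)⁻¹ • (x + ((-2:ℝ)*s) • d)) := by rw [hp₁def]; module
    have e2 : s • d - p₂ = -((2:ℝ)⁻¹ • (y + ((-2:ℝ)*s) • d)) := by rw [hp₂def]; module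
    have e3 : s • d - p₃ = z + s • d := by rw [hp₃def]; module
    rw [e1, e2, e3, hsymmg, hsymmg,
      gauge_smul_of_nonneg (by norm_num : (0:ℝ) ≤ 2⁻¹), smul_eq_mul,
      gauge_smul_of_nonneg (by norm_num : (0:ℝ) ≤ 2⁻¹), smul_eq_mul] at h0
    linarith
  -- derivative of the error terms
  have hE : ∀ (p : EuclideanSpace ℝ (Fin n)),
      gauge K p = 1 →
      HasDerivAt (fun t : ℝ => gauge K (p + t • d)) 0 0 →
      Filter.Tendsto (fun s : ℝ => (gauge K (p + ((-2:ℝ)*s) • d) - 1) / s)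
        (nhdsWithin 0 (Set.Ioi 0)) (nhds 0) := by
    intro p hp1 hdp
    have hm : HasDerivAt (fun s : ℝ => (-2:ℝ) * s) (-2) 0 := by
      simpa using (hasDerivAt_id (0:ℝ)).const_mul (-2:ℝ)
    have hdp' : HasDerivAt (fun t : ℝ => gauge K (p + t • d)) 0 ((fun s : ℝ => (-2:ℝ)*s) 0) := by
      simpa using hdp
    have hcomp := hdp'.comp 0 hm
    have hcomp' : HasDerivAt (fun s : ℝ => gauge K (p + ((-2:ℝ)*s) • d) - 1) 0 0 := by
      simpa [Function.comp] using hcomp.sub_const 1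
    have h0 : (fun s : ℝ => gauge K (p + ((-2:ℝ)*s) • d) - 1) 0 = 0 := by
      norm_num [hp1]
    have hsl := hasDerivAt_iff_tendsto_slope.mp hcomp'
    have hmono : nhdsWithin (0:ℝ) (Set.Ioi 0) ≤ nhdsWithin (0:ℝ) {(0:ℝ)}ᶜ :=
      nhdsWithin_mono 0 (fun u hu => ne_of_gt hu)
    have := hsl.mono_left hmono
    refine this.congr (fun s => ?_)
    rw [slope_def_field]
    simp [hp1]
  have ht₁ := hE x hx1 hd₁
  have ht₂ := hE y hy1 hd₂
  -- conclude
  intro t ht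
  rcases eq_or_lt_of_le ht with rfl | hT
  · rw [zero_smul, add_zero, hz1]
  · -- chord inequality for s ∈ (0, t)
    have hkey : ∀ s : ℝ, s ∈ Set.Ioo (0:ℝ) t →
        1 - t * ((α/2) * ((gauge K (x + ((-2:ℝ)*s) • d) - 1) / s)
          + (β/2) * ((gauge K (y + ((-2:ℝ)*s) • d) - 1) / s)) ≤ gauge K (z + t • d) := by
      intro s hs
      obtain ⟨hs0, hst⟩ := hs
      have hTne : t ≠ 0 := hT.ne'
      have hsne : s ≠ 0 := hs0.ne'
      have hchord : gauge K (z + s • d) ≤ (1 - s/t) * 1 + (s/t) * gauge K (z + t • d) := by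
        have hcombo : z + s • d = (1 - s/t) • z + (s/t) • (z + t • d) := by
          match_scalars <;> field_simp <;> ring
        rw [hcombo]
        calc gauge K ((1 - s/t) • z + (s/t) • (z + t • d))
            ≤ gauge K ((1 - s/t) • z) + gauge K ((s/t) • (z + t • d)) :=
              gauge_add_le hKconv habs _ _
          _ = (1 - s/t) * gauge K z + (s/t) * gauge K (z + t • d) := by
              rw [gauge_smul_of_nonneg (by positivity : (0:ℝ) ≤ s/t),
                gauge_smul_of_nonneg (by have := (div_le_one hT).mpr hst.le; linarith : (0:ℝ) ≤ 1 - s/t),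
                smul_eq_mul, smul_eq_mul]
          _ = (1 - s/t) * 1 + (s/t) * gauge K (z + t • d) := by rw [hz1]
      have h2 := hstep s
      set E₁ := gauge K (x + ((-2:ℝ)*s) • d)
      set E₂ := gauge K (y + ((-2:ℝ)*s) • d)
      have h3 : (α/2) * (1 - E₁) + (β/2) * (1 - E₂) + s/t ≤ (s/t) * gauge K (z + t • d) := by
        linarith [hchord, h2]
      have h4 := mul_le_mul_of_nonneg_left h3 (le_of_lt (div_pos hT hs0))
      have h5 : (t/s) * ((s/t) * gauge K (z + t • d)) = gauge K (z + t • d) := by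
        field_simp
      have h6 : (t/s) * ((α/2) * (1 - E₁) + (β/2) * (1 - E₂) + s/t)
          = 1 - t * ((α/2) * ((E₁ - 1)/s) + (β/2) * ((E₂ - 1)/s)) := by
        field_simp
        ring
      rw [h5, h6] at h4
      exact h4
    have hφ : Filter.Tendsto
        (fun s : ℝ => 1 - t * ((α/2) * ((gauge K (x + ((-2:ℝ)*s) • d) - 1) / s)
          + (β/2) * ((gauge K (y + ((-2:ℝ)*s) • d) - 1) / s)))
        (nhdsWithin 0 (Set.Ioi 0)) (nhds 1) := by
      have : Filter.Tendsto
          (fun s : ℝ => (α/2) * ((gauge K (x + ((-2:ℝ)*s) • d) - 1) / s)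
            + (β/2) * ((gauge K (y + ((-2:ℝ)*s) • d) - 1) / s))
          (nhdsWithin 0 (Set.Ioi 0)) (nhds 0) := by
        have := (ht₁.const_mul (α/2)).add (ht₂.const_mul (β/2))
        simpa using this
      have h2 := (this.const_mul t).const_sub 1
      simpa using h2
    exact le_of_tendsto hφ
      (Filter.eventually_of_mem (Ioo_mem_nhdsGT_of_mem ⟨le_refl 0, hT⟩) hkey)


open scoped Pointwise in
set_option maxHeartbeats 4000000 in
/-- Proposition 7: if `K ⊆ ℝ³` is intuitive, `H = ℓ^⊥`, `L = K ∩ H`, and there are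
boundary points `x, y` of `L` at which `‖·‖_K` is differentiable, with subgradients
(in `H`) of the restricted norm spanning `H`, then the boundary of `L` is contained
in a shadow boundary `S(K, u)`. -/
theorem boundary_section_subset_shadowBoundary
    (K : Set (EuclideanSpace ℝ (Fin 3))) (hK : IsSymmConvexBody K) (hI : Intuitive K)
    (ℓ : EuclideanSpace ℝ (Fin 3)) (hℓ : ‖ℓ‖ = 1)
    (H : Submodule ℝ (EuclideanSpace ℝ (Fin 3))) (hH : H = (ℝ ∙ ℓ)ᗮ)
    (x y : EuclideanSpace ℝ (Fin 3)) (hxH : x ∈ H) (hyH : y ∈ H)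
    (hx : gauge K x = 1) (hy : gauge K y = 1)
    (hdx : DifferentiableAt ℝ (gauge K) x) (hdy : DifferentiableAt ℝ (gauge K) y)
    (gx gy : EuclideanSpace ℝ (Fin 3)) (hgxH : gx ∈ H) (hgyH : gy ∈ H)
    (hgx : ∀ w ∈ H, gauge K x + ⟪gx, w - x⟫ ≤ gauge K w)
    (hgy : ∀ w ∈ H, gauge K y + ⟪gy, w - y⟫ ≤ gauge K w)
    (hspan : Submodule.span ℝ {gx, gy} = H) :
    ∃ u : EuclideanSpace ℝ (Fin 3), ‖u‖ = 1 ∧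
      {z : EuclideanSpace ℝ (Fin 3) | z ∈ H ∧ gauge K z = 1} ⊆ shadowBoundary K u := by
  obtain ⟨hKconv, hKcomp, hKint, hKsym⟩ := hK

  have hKclosed : IsClosed K := hKcomp.isClosed
  have hsymmS : ∀ w ∈ K, -w ∈ K := by
    intro w hw
    rw [hKsym]
    simpa using hw
  have hsymmg : ∀ w : EuclideanSpace ℝ (Fin 3), gauge K (-w) = gauge K w := gauge_neg hsymmS
  have h0int : (0 : EuclideanSpace ℝ (Fin 3)) ∈ interior K := by
    obtain ⟨w, hw⟩ := hKint
    have hw2 : -w ∈ interior K := by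
      have h1 : interior (-K) = -interior K := by
        rw [show (-K : Set (EuclideanSpace ℝ (Fin 3))) = (-1:ℝ) • K by
            rw [Set.neg_smul_set]; simp,
          interior_smul₀ (by norm_num : (-1:ℝ) ≠ 0) K]
        rw [Set.neg_smul_set]; simp
      rw [hKsym, h1]
      exact Set.neg_mem_neg.mpr hw
    have := (hKconv.interior) hw hw2 (by norm_num : (0:ℝ) ≤ 2⁻¹)
      (by norm_num : (0:ℝ) ≤ 2⁻¹) (by norm_num)
    simpa using this
  have habs : Absorbent ℝ K := absorbent_nhds_zero (mem_interior_iff_mem_nhds.mp h0int)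
  have hK0 : (0 : EuclideanSpace ℝ (Fin 3)) ∈ K := interior_subset h0int
  have hmemK : ∀ w, gauge K w ≤ 1 → w ∈ K := by
    intro w hw
    have := (gauge_le_one_iff_mem_closure hKconv (mem_interior_iff_mem_nhds.mp h0int)).mp hw
    rwa [hKclosed.closure_eq] at this
  have hltint : ∀ w ∈ interior K, gauge K w < 1 := fun w hw =>
    interior_subset_gauge_lt_one K hw
  have hlt1mem : ∀ w, gauge K w < 1 → w ∈ K := fun w hw =>
    gauge_lt_one_subset_self hKconv hK0 habs hw
  -- derivative along a line
  have hlineD : ∀ (p w : EuclideanSpace ℝ (Fin 3)), DifferentiableAt ℝ (gauge K) p →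
      HasDerivAt (fun t : ℝ => gauge K (p + t • w)) (fderiv ℝ (gauge K) p w) 0 := by
    intro p w hdp
    have h1 : HasDerivAt (fun t : ℝ => p + t • w) w 0 := by
      simpa using ((hasDerivAt_id (0:ℝ)).smul_const w).const_add p
    have h2 := hdp.hasFDerivAt.comp_hasDerivAt_of_eq 0 h1 (by simp)
    exact h2
  -- the H-subgradient is the restriction of the derivative
  have hgxD : ∀ w ∈ H, fderiv ℝ (gauge K) x w = ⟪gx, w⟫ := by
    intro w hw
    have hsub₁ : ∀ u ∈ H, (1:ℝ) + ⟪gx, u - x⟫ ≤ gauge K u := by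
      intro u hu; have := hgx u hu; rwa [hx] at this
    have hq : ∀ t : ℝ, (0:ℝ) ≤ gauge K (x + t • w) - (1 + t * ⟪gx, w⟫) := by
      intro t
      have h1 := hsub₁ (x + t • w) (H.add_mem hxH (H.smul_mem t hw))
      have h2 : ⟪gx, x + t • w - x⟫ = t * ⟪gx, w⟫ := by
        rw [show x + t • w - x = t • w by module, real_inner_smul_right]
      rw [h2] at h1
      linarith
    have hder : HasDerivAt (fun t : ℝ => gauge K (x + t • w) - (1 + t * ⟪gx, w⟫))
        (fderiv ℝ (gauge K) x w - ⟪gx, w⟫) 0 := by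
      exact (hlineD x w hdx).sub ((hasDerivAt_mul_const _).const_add 1)
    have hmin : IsLocalMin (fun t : ℝ => gauge K (x + t • w) - (1 + t * ⟪gx, w⟫)) 0 := by
      refine Filter.Eventually.of_forall (fun t => ?_)
      have h0 : gauge K (x + (0:ℝ) • w) - (1 + (0:ℝ) * ⟪gx, w⟫) = 0 := by
        simp [hx]
      simp only [h0]
      exact hq t
    have := hmin.hasDerivAt_eq_zero hder
    linarith [this]
  have hgyD : ∀ w ∈ H, fderiv ℝ (gauge K) y w = ⟪gy, w⟫ := by
    intro w hw
    have hsub₂ : ∀ u ∈ H, (1:ℝ) + ⟪gy, u - y⟫ ≤ gauge K u := by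
      intro u hu; have := hgy u hu; rwa [hy] at this
    have hq : ∀ t : ℝ, (0:ℝ) ≤ gauge K (y + t • w) - (1 + t * ⟪gy, w⟫) := by
      intro t
      have h1 := hsub₂ (y + t • w) (H.add_mem hyH (H.smul_mem t hw))
      have h2 : ⟪gy, y + t • w - y⟫ = t * ⟪gy, w⟫ := by
        rw [show y + t • w - y = t • w by module, real_inner_smul_right]
      rw [h2] at h1
      linarith
    have hder : HasDerivAt (fun t : ℝ => gauge K (y + t • w) - (1 + t * ⟪gy, w⟫))
        (fderiv ℝ (gauge K) y w - ⟪gy, w⟫) 0 := by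
      exact (hlineD y w hdy).sub ((hasDerivAt_mul_const _).const_add 1)
    have hmin : IsLocalMin (fun t : ℝ => gauge K (y + t • w) - (1 + t * ⟪gy, w⟫)) 0 := by
      refine Filter.Eventually.of_forall (fun t => ?_)
      have h0 : gauge K (y + (0:ℝ) • w) - (1 + (0:ℝ) * ⟪gy, w⟫) = 0 := by
        simp [hy]
      simp only [h0]
      exact hq t
    have := hmin.hasDerivAt_eq_zero hder
    linarith [this]
  -- finrank of H
  have hℓ0 : ℓ ≠ 0 := by
    intro h; rw [h, norm_zero] at hℓ; norm_num at hℓ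
  have hfinH : Module.finrank ℝ ↥H = 2 := by
    have h1 : Module.finrank ℝ ↥(ℝ ∙ ℓ) = 1 := finrank_span_singleton hℓ0
    have h2 := Submodule.finrank_add_finrank_orthogonal (K := (ℝ ∙ ℓ))
    rw [h1, finrank_euclideanSpace_fin] at h2
    rw [hH]
    omega
  -- construction of v
  have hsurj : ∀ c₁ c₂ : ℝ, ∃ v ∈ H, ⟪gx, v⟫ = c₁ ∧ ⟪gy, v⟫ = c₂ := by
    intro c₁ c₂
    set Tm : EuclideanSpace ℝ (Fin 3) →ₗ[ℝ] ℝ × ℝ :=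
      LinearMap.prod (innerₛₗ ℝ gx) (innerₛₗ ℝ gy) with hTm
    set T' : ↥H →ₗ[ℝ] ℝ × ℝ := Tm.domRestrict H with hT'
    have hinj : Function.Injective T' := by
      rw [← LinearMap.ker_eq_bot, Submodule.eq_bot_iff]
      intro w hw
      have h1 : ⟪gx, (w : EuclideanSpace ℝ (Fin 3))⟫ = 0 ∧
          ⟪gy, (w : EuclideanSpace ℝ (Fin 3))⟫ = 0 := by
        have h2 := LinearMap.mem_ker.mp hw
        rw [hT'] at h2
        constructor
        · have := congrArg Prod.fst h2; simpa [hTm] using this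
        · have := congrArg Prod.snd h2; simpa [hTm] using this
      have hwspan : (w : EuclideanSpace ℝ (Fin 3)) ∈ Submodule.span ℝ {gx, gy} := by
        rw [hspan]; exact w.2
      obtain ⟨a, b, hab⟩ := Submodule.mem_span_pair.mp hwspan
      have h3 : ⟪(w : EuclideanSpace ℝ (Fin 3)), (w : EuclideanSpace ℝ (Fin 3))⟫ = 0 := by
        calc ⟪(w : EuclideanSpace ℝ (Fin 3)), (w : EuclideanSpace ℝ (Fin 3))⟫
            = ⟪a • gx + b • gy, (w : EuclideanSpace ℝ (Fin 3))⟫ := by rw [hab]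
          _ = a * ⟪gx, (w:EuclideanSpace ℝ (Fin 3))⟫ + b * ⟪gy, (w:EuclideanSpace ℝ (Fin 3))⟫ := by
              rw [inner_add_left, real_inner_smul_left, real_inner_smul_left]
          _ = 0 := by rw [h1.1, h1.2]; ring
      have h4 : (w : EuclideanSpace ℝ (Fin 3)) = 0 := by rwa [inner_self_eq_zero] at h3
      exact Subtype.ext h4
    have hrank : Module.finrank ℝ ↥H = Module.finrank ℝ (ℝ × ℝ) := by
      rw [hfinH, Module.finrank_prod, Module.finrank_self]
    have hs := (LinearMap.injective_iff_surjective_of_finrank_eq_finrank hrank).mp hinj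
    obtain ⟨v', hv'⟩ := hs (c₁, c₂)
    refine ⟨(v' : EuclideanSpace ℝ (Fin 3)), v'.2, ?_, ?_⟩
    · have := congrArg Prod.fst hv'; simpa [hT', hTm] using this
    · have := congrArg Prod.snd hv'; simpa [hT', hTm] using this
  obtain ⟨v, hvH, hv₁, hv₂⟩ := hsurj (fderiv ℝ (gauge K) x ℓ) (fderiv ℝ (gauge K) y ℓ)
  -- fderiv of even function at -p
  have hfneg : ∀ (p : EuclideanSpace ℝ (Fin 3)), DifferentiableAt ℝ (gauge K) p →
      ∀ w, fderiv ℝ (gauge K) (-p) w = -(fderiv ℝ (gauge K) p w) := by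
    intro p hdp w
    have hieq : (gauge K) ∘ (fun q : EuclideanSpace ℝ (Fin 3) => -q) = gauge K := by
      funext q; simp [hsymmg q]
    have hneg : HasFDerivAt (fun q : EuclideanSpace ℝ (Fin 3) => -q)
        (-(ContinuousLinearMap.id ℝ (EuclideanSpace ℝ (Fin 3)))) (-p) := by
      exact (hasFDerivAt_id (-p)).neg
    have hdp' : HasFDerivAt (gauge K) (fderiv ℝ (gauge K) p)
        ((fun q : EuclideanSpace ℝ (Fin 3) => -q) (-p)) := by
      simpa using hdp.hasFDerivAt
    have hcomp := hdp'.comp (-p) hneg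
    rw [hieq] at hcomp
    have := hcomp.fderiv
    rw [this]
    simp
  -- non-degeneracy of x, y
  have hspanle : ∀ g : EuclideanSpace ℝ (Fin 3), H ≤ Submodule.span ℝ ({g} : Set _) → False := by
    intro g hle
    have h1 := Submodule.finrank_mono hle
    rcases eq_or_ne g 0 with hg | hg
    · rw [hg, Submodule.span_zero_singleton, finrank_bot, hfinH] at h1; omega
    · rw [finrank_span_singleton hg, hfinH] at h1; omega
  have hxy : x ≠ y := by
    intro hxyeq
    have hgeq : gx = gy := by
      have hdiff := H.sub_mem hgxH hgyH
      have h2 : ⟪gx - gy, gx - gy⟫ = 0 := by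
        rw [inner_sub_left, ← hgxD _ hdiff, ← hgyD _ hdiff, hxyeq, sub_self]
      rwa [inner_self_eq_zero, sub_eq_zero] at h2
    refine hspanle gy ?_
    rw [← hspan]
    refine Submodule.span_le.mpr ?_
    intro u hu
    simp only [Set.mem_insert_iff, Set.mem_singleton_iff] at hu
    rcases hu with rfl | rfl
    · rw [hgeq]; exact Submodule.mem_span_singleton_self _
    · exact Submodule.mem_span_singleton_self _
  have hxny : x ≠ -y := by
    intro hxyeq
    have hgeq : gx = -gy := by
      have hdiff := H.add_mem hgxH hgyH
      have h2 : ⟪gx + gy, gx + gy⟫ = 0 := by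
        have h1 : fderiv ℝ (gauge K) x (gx + gy) = -(fderiv ℝ (gauge K) y (gx + gy)) := by
          rw [hxyeq]; exact hfneg y hdy _
        rw [inner_add_left, ← hgxD _ hdiff, ← hgyD _ hdiff, h1, neg_add_cancel]
      rwa [inner_self_eq_zero, add_eq_zero_iff_eq_neg] at h2
    refine hspanle gy ?_
    rw [← hspan]
    refine Submodule.span_le.mpr ?_
    intro u hu
    simp only [Set.mem_insert_iff, Set.mem_singleton_iff] at hu
    rcases hu with rfl | rfl
    · rw [hgeq]; exact Submodule.neg_mem _ (Submodule.mem_span_singleton_self _)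
    · exact Submodule.mem_span_singleton_self _
  -- packaged subgradient inequalities
  have hsub₁' : ∀ w ∈ H, (1:ℝ) + ⟪gx, w - x⟫ ≤ gauge K w := by
    intro w hw; have := hgx w hw; rwa [hx] at this
  have hsub₂' : ∀ w ∈ H, (1:ℝ) + ⟪gy, w - y⟫ ≤ gauge K w := by
    intro w hw; have := hgy w hw; rwa [hy] at this
  have hsub₁n : ∀ w ∈ H, (1:ℝ) + ⟪-gx, w - -x⟫ ≤ gauge K w := by
    intro w hw
    have h1 := hsub₁' (-w) (H.neg_mem hw)
    rw [hsymmg] at h1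
    have h2 : ⟪gx, -w - x⟫ = ⟪-gx, w - -x⟫ := by
      rw [inner_neg_left, show -w - x = -(w - -x) by module, inner_neg_right]
    rwa [h2] at h1
  have hsub₂n : ∀ w ∈ H, (1:ℝ) + ⟪-gy, w - -y⟫ ≤ gauge K w := by
    intro w hw
    have h1 := hsub₂' (-w) (H.neg_mem hw)
    rw [hsymmg] at h1
    have h2 : ⟪gy, -w - y⟫ = ⟪-gy, w - -y⟫ := by
      rw [inner_neg_left, show -w - y = -(w - -y) by module, inner_neg_right]
    rwa [h2] at h1
  have hxH' : -x ∈ H := H.neg_mem hxH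
  have hyH' : -y ∈ H := H.neg_mem hyH
  have hx1' : gauge K (-x) = 1 := by rw [hsymmg, hx]
  have hy1' : gauge K (-y) = 1 := by rw [hsymmg, hy]
  set d : EuclideanSpace ℝ (Fin 3) := v - ℓ with hddef
  have hDxd : fderiv ℝ (gauge K) x d = 0 := by
    rw [hddef, map_sub, hgxD v hvH, hv₁, sub_self]
  have hDyd : fderiv ℝ (gauge K) y d = 0 := by
    rw [hddef, map_sub, hgyD v hvH, hv₂, sub_self]
  have hlinex : HasDerivAt (fun t : ℝ => gauge K (x + t • d)) 0 0 := by
    have := hlineD x d hdx; rwa [hDxd] at this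
  have hliney : HasDerivAt (fun t : ℝ => gauge K (y + t • d)) 0 0 := by
    have := hlineD y d hdy; rwa [hDyd] at this
  have hlinexn : HasDerivAt (fun t : ℝ => gauge K (-x + t • d)) 0 0 := by
    have hfe : (fun t : ℝ => gauge K (-x + t • d)) = (fun t : ℝ => gauge K (x + t • (-d))) := by
      funext t
      rw [← hsymmg (x + t • (-d))]
      congr 1
      module
    rw [hfe]
    have := hlineD x (-d) hdx
    rwa [map_neg, hDxd, neg_zero] at this
  have hlineyn : HasDerivAt (fun t : ℝ => gauge K (-y + t • d)) 0 0 := by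
    have hfe : (fun t : ℝ => gauge K (-y + t • d)) = (fun t : ℝ => gauge K (y + t • (-d))) := by
      funext t
      rw [← hsymmg (y + t • (-d))]
      congr 1
      module
    rw [hfe]
    have := hlineD y (-d) hdy
    rwa [map_neg, hDyd, neg_zero] at this
  have hnxy : -x ≠ y := fun h => hxny (by rw [← h, neg_neg])
  have hnxny : -x ≠ -y := fun h => hxy (neg_injective h)
  -- the key pointwise statement
  have keyz : ∀ z : EuclideanSpace ℝ (Fin 3), z ∈ H → gauge K z = 1 →
      ∀ t : ℝ, 0 ≤ t → 1 ≤ gauge K (z + t • d) := by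
    intro z hzH hz1
    have hznotint : z ∉ interior K := by
      intro hzin
      have := hltint z hzin
      rw [hz1] at this
      exact lt_irrefl 1 this
    obtain ⟨f, hf⟩ :=
      geometric_hahn_banach_open_point (hKconv.interior) isOpen_interior hznotint
    have hfz : 0 < f z := by
      have := hf 0 h0int
      simpa using this
    have hfK : ∀ w ∈ K, f w ≤ f z := by
      intro w hw
      by_contra hlt
      push_neg at hlt
      have hfw : 0 < f w := lt_trans hfz hlt
      have hc0 : 0 < (f z + f w) / (2 * f w) := by positivity
      have hmem : ((f z + f w) / (2 * f w)) • w ∈ interior K := by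
        have := hKconv.combo_interior_self_mem_interior h0int hw
          (a := 1 - (f z + f w) / (2 * f w)) (b := (f z + f w) / (2 * f w))
          (by rw [sub_pos, div_lt_one (by positivity)]; linarith) hc0.le (by ring)
        simpa using this
      have h2 := hf _ hmem
      rw [map_smul, smul_eq_mul] at h2
      have h3 : (f z + f w) / (2 * f w) * f w = (f z + f w) / 2 := by field_simp
      rw [h3] at h2
      linarith
    have hfg : ∀ w, f w ≤ f z * gauge K w := by
      intro w
      rcases (gauge_nonneg (s := K) w).lt_or_eq with hg | hg
      · by_contra hlt
        push_neg at hlt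
        have hnum : 0 < f w - f z * gauge K w := by linarith
        set ε := (f w - f z * gauge K w) / (2 * f z) with hε
        have hε0 : 0 < ε := by rw [hε]; positivity
        have hmem : ((gauge K w + ε)⁻¹) • w ∈ K := by
          apply hlt1mem
          rw [gauge_smul_of_nonneg (by positivity), smul_eq_mul, inv_mul_eq_div,
            div_lt_one (by positivity)]
          linarith
        have h2 := hfK _ hmem
        rw [map_smul, smul_eq_mul, inv_mul_eq_div, div_le_iff₀ (by positivity)] at h2
        have h3 : f z * ε = (f w - f z * gauge K w) / 2 := by
          rw [hε]; field_simp
        nlinarith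
      · by_contra hlt
        push_neg at hlt
        rw [← hg, mul_zero] at hlt
        have hmem : ((f z + 1) / f w) • w ∈ K := by
          apply hlt1mem
          rw [gauge_smul_of_nonneg (by positivity), smul_eq_mul, ← hg, mul_zero]
          norm_num
        have h2 := hfK _ hmem
        rw [map_smul, smul_eq_mul, div_mul_cancel₀ _ hlt.ne'] at h2
        linarith
    set G : EuclideanSpace ℝ (Fin 3) :=
      (InnerProductSpace.toDual ℝ (EuclideanSpace ℝ (Fin 3))).symm ((f z)⁻¹ • f) with hGdef
    have hGapp : ∀ w, ⟪G, w⟫ = (f z)⁻¹ * f w := by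
      intro w
      rw [hGdef, InnerProductSpace.toDual_symm_apply]
      simp
    have hGz : ⟪G, z⟫ = 1 := by rw [hGapp, inv_mul_cancel₀ hfz.ne']
    have hGle : ∀ w, ⟪G, w⟫ ≤ gauge K w := by
      intro w
      rw [hGapp]
      calc (f z)⁻¹ * f w ≤ (f z)⁻¹ * (f z * gauge K w) :=
            mul_le_mul_of_nonneg_left (hfg w) (inv_nonneg.mpr hfz.le)
        _ = gauge K w := by rw [inv_mul_cancel_left₀ hfz.ne']
    set g₃ : EuclideanSpace ℝ (Fin 3) := G - ⟪G, ℓ⟫ • ℓ with hg₃def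
    have hℓg₃ : ⟪ℓ, g₃⟫ = 0 := by
      rw [hg₃def, inner_sub_right, real_inner_smul_right, real_inner_self_eq_norm_sq, hℓ,
        real_inner_comm ℓ G]
      ring
    have hg₃H : g₃ ∈ H := by
      rw [hH, Submodule.mem_orthogonal]
      intro u hu
      obtain ⟨c, rfl⟩ := Submodule.mem_span_singleton.mp hu
      rw [real_inner_smul_left, hℓg₃, mul_zero]
    have horthℓ : ∀ w ∈ H, ⟪ℓ, w⟫ = 0 := by
      intro w hw
      have hw' : w ∈ (ℝ ∙ ℓ)ᗮ := by rw [← hH]; exact hw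
      exact (Submodule.mem_orthogonal _ _).mp hw' ℓ (Submodule.mem_span_singleton_self ℓ)
    have hsub₃ : ∀ w ∈ H, (1:ℝ) + ⟪g₃, w - z⟫ ≤ gauge K w := by
      intro w hw
      have h1 : ⟪g₃, w - z⟫ = ⟪G, w⟫ - 1 := by
        rw [hg₃def, inner_sub_left, real_inner_smul_left,
          horthℓ _ (H.sub_mem hw hzH), mul_zero, sub_zero, inner_sub_right, hGz]
      rw [h1]
      have := hGle w
      linarith
    have hg₃span : g₃ ∈ Submodule.span ℝ ({gx, gy} : Set _) := by rw [hspan]; exact hg₃H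
    obtain ⟨a, b, hab⟩ := Submodule.mem_span_pair.mp hg₃span
    rcases le_or_gt 0 a with ha | ha <;> rcases le_or_gt 0 b with hb | hb
    · exact main_ineq hKconv habs hsymmg hI H x y z gx gy g₃ d hxH hyH hzH hx hy hz1 hxy
        a b ha hb hab hsub₁' hsub₂' hsub₃ hlinex hliney
    · exact main_ineq hKconv habs hsymmg hI H x (-y) z gx (-gy) g₃ d hxH hyH' hzH hx hy1' hz1
        hxny a (-b) ha (by linarith)
        (by rw [show a • gx + (-b) • (-gy) = a • gx + b • gy by module, hab])
        hsub₁' hsub₂n hsub₃ hlinex hlineyn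
    · exact main_ineq hKconv habs hsymmg hI H (-x) y z (-gx) gy g₃ d hxH' hyH hzH hx1' hy hz1
        hnxy (-a) b (by linarith) hb
        (by rw [show (-a) • (-gx) + b • gy = a • gx + b • gy by module, hab])
        hsub₁n hsub₂' hsub₃ hlinexn hliney
    · exact main_ineq hKconv habs hsymmg hI H (-x) (-y) z (-gx) (-gy) g₃ d hxH' hyH' hzH
        hx1' hy1' hz1 hnxny (-a) (-b) (by linarith) (by linarith)
        (by rw [show (-a) • (-gx) + (-b) • (-gy) = a • gx + b • gy by module, hab])
        hsub₁n hsub₂n hsub₃ hlinexn hlineyn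
  -- all t, direction ℓ - v
  have hkeyall : ∀ z : EuclideanSpace ℝ (Fin 3), z ∈ H → gauge K z = 1 →
      ∀ t : ℝ, 1 ≤ gauge K (z + t • (ℓ - v)) := by
    intro z hzH hz1 t
    rcases le_or_gt t 0 with htle | htpos
    · have := keyz z hzH hz1 (-t) (by linarith)
      rwa [hddef, show z + (-t) • (v - ℓ) = z + t • (ℓ - v) by module] at this
    · have hz1n : gauge K (-z) = 1 := by rw [hsymmg, hz1]
      have := keyz (-z) (H.neg_mem hzH) hz1n t htpos.le
      rw [hddef, show -z + t • (v - ℓ) = -(z + t • (ℓ - v)) by module, hsymmg] at this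
      exact this
  -- define the direction u
  have hvℓ : ℓ - v ≠ 0 := by
    intro h
    have hveq : ℓ = v := sub_eq_zero.mp h
    have hℓH : ℓ ∈ H := hveq ▸ hvH
    have hself : ⟪ℓ, ℓ⟫ = (0:ℝ) := by
      have hw' : ℓ ∈ (ℝ ∙ ℓ)ᗮ := by rw [← hH]; exact hℓH
      exact (Submodule.mem_orthogonal _ _).mp hw' ℓ (Submodule.mem_span_singleton_self ℓ)
    rw [real_inner_self_eq_norm_sq, hℓ] at hself
    norm_num at hself
  have hnorm : ‖ℓ - v‖ ≠ 0 := norm_ne_zero_iff.mpr hvℓ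
  refine ⟨‖ℓ - v‖⁻¹ • (ℓ - v), ?_, ?_⟩
  · rw [norm_smul, norm_inv, norm_norm, inv_mul_cancel₀ hnorm]
  · intro z hzmem
    obtain ⟨hzH, hz1⟩ := hzmem
    have hzK : z ∈ K := hmemK z (le_of_eq hz1)
    have hlineK : ∀ t : ℝ, z + t • (‖ℓ - v‖⁻¹ • (ℓ - v)) ∉ interior K := by
      intro t hmem'
      have h2 := hltint _ hmem'
      have h3 : 1 ≤ gauge K (z + t • (‖ℓ - v‖⁻¹ • (ℓ - v))) := by
        have := hkeyall z hzH hz1 (t * ‖ℓ - v‖⁻¹)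
        rwa [show z + (t * ‖ℓ - v‖⁻¹) • (ℓ - v) = z + t • (‖ℓ - v‖⁻¹ • (ℓ - v)) by module]
          at this
      linarith
    constructor
    · refine Set.mem_iUnion.mpr ⟨z, Set.mem_iUnion.mpr ⟨?_, ⟨0, by simp⟩⟩⟩
      constructor
      · exact ⟨z, ⟨0, by simp⟩, hzK⟩
      · apply Set.eq_empty_iff_forall_notMem.mpr
        rintro p ⟨⟨t, rfl⟩, hpint⟩
        exact hlineK t hpint
    · exact hzK
end
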